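/- Let G be a real p×q matrix. There exists a matrix F ∈ ℝ^{q×p} such that the spectral radius of I_p − G·F is strictly less than 1 if and only if G has full row rank (rank G = p). -/

import Mathlib

open Matrix

/-- Spectral radius of a real square matrix: the spectral radius of its
complexification, i.e. the sup of the norms of its complex eigenvalues. -/
noncomputable def specRad {n : ℕ} (A : Matrix (Fin n) (Fin n) ℝ) : ENNReal :=
  spectralRadius ℂ (A.map (algebraMap ℝ ℂ))

lemma aux_isUnit {n : ℕ} (A : Matrix (Fin n) (Fin n) ℝ) (h : A.rank = n) : IsUnit A := by
  have he : (Matrix.toLinAlgEquiv' A : (Fin n → ℝ) →ₗ[ℝ] Fin n → ℝ) = A.mulVecLin := by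
    exact Matrix.toLin'_apply' A
  have hA : IsUnit (Matrix.toLinAlgEquiv' A) := by
    rw [LinearMap.isUnit_iff_range_eq_top]
    apply Submodule.eq_top_of_finrank_eq
    rw [he]
    simpa [Module.finrank_pi, Matrix.rank] using h
  simpa using hA.map Matrix.toLinAlgEquiv'.symm

/-- There exists `F` with `ρ(I_p − G·F) < 1` iff `G` has full row rank. -/
theorem stmt1 {p q : ℕ} (G : Matrix (Fin p) (Fin q) ℝ) :
    (∃ F : Matrix (Fin q) (Fin p) ℝ, specRad (1 - G * F) < 1) ↔ G.rank = p := by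
  constructor
  · rintro ⟨F, hF⟩
    set φ := (algebraMap ℝ ℂ).mapMatrix (m := Fin p)
    have h1 : IsUnit ((algebraMap ℂ (Matrix (Fin p) (Fin p) ℂ)) 1
        - (1 - G * F).map (algebraMap ℝ ℂ)) := by
      rw [← spectrum.notMem_iff]
      intro hmem
      have hle : (‖(1 : ℂ)‖₊ : ENNReal) ≤ specRad (1 - G * F) :=
        le_iSup₂ (α := ENNReal) (1 : ℂ) hmem
      simp only [nnnorm_one, ENNReal.coe_one] at hle
      exact absurd hF (not_lt.mpr hle)
    have h2 : IsUnit (φ (G * F)) := by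
      have : (algebraMap ℂ (Matrix (Fin p) (Fin p) ℂ)) 1 - (1 - G * F).map (algebraMap ℝ ℂ)
          = φ (G * F) := by
        have : (1 - G * F).map (algebraMap ℝ ℂ) = φ (1 - G * F) := rfl
        rw [this, _root_.map_one (algebraMap ℂ (Matrix (Fin p) (Fin p) ℂ)), map_sub,
          _root_.map_one, sub_sub_cancel]
      rwa [this] at h1
    have hdet : IsUnit (G * F).det := by
      have hd : IsUnit (φ (G * F)).det := (Matrix.isUnit_iff_isUnit_det _).mp h2
      rw [show φ (G * F) = (algebraMap ℝ ℂ).mapMatrix (G * F) from rfl,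
        ← RingHom.map_det] at hd
      rcases eq_or_ne (G * F).det 0 with h0 | h0
      · rw [h0, map_zero] at hd
        exact absurd hd not_isUnit_zero
      · exact h0.isUnit
    have hrank : (G * F).rank = p := by
      simpa using Matrix.rank_of_isUnit _ ((Matrix.isUnit_iff_isUnit_det _).mpr hdet)
    refine le_antisymm (Matrix.rank_le_height G) ?_
    calc p = (G * F).rank := hrank.symm
    _ ≤ G.rank := Matrix.rank_mul_le_left G F
  · intro h
    have hGGt : IsUnit (G * Gᵀ) := aux_isUnit _ (by rw [Matrix.rank_self_mul_transpose, h])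
    refine ⟨Gᵀ * (G * Gᵀ)⁻¹, ?_⟩
    have hone : G * (Gᵀ * (G * Gᵀ)⁻¹) = 1 := by
      rw [← Matrix.mul_assoc, Matrix.mul_nonsing_inv _ ((Matrix.isUnit_iff_isUnit_det _).mp hGGt)]
    rw [hone, sub_self]
    have hz : specRad (0 : Matrix (Fin p) (Fin p) ℝ) = 0 := by
      unfold specRad
      rw [Matrix.map_zero _ (map_zero _)]
      rw [spectralRadius]
      refine le_antisymm ?_ zero_le
      refine iSup₂_le fun k hk => ?_
      rcases subsingleton_or_nontrivial (Matrix (Fin p) (Fin p) ℂ) with hs | hn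
      · exact absurd hk (spectrum.notMem_iff.mpr (isUnit_of_subsingleton _))
      · rw [spectrum.zero_eq] at hk
        simp only [Set.mem_singleton_iff] at hk
        simp [hk]
    rw [hz]
    exact zero_lt_one
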